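/- Let A be a C*-algebra whose underlying topological space is separable, let ι be a nonempty index type, k : ι → ℕ, and for each α ∈ ι let ν_α : A → Matrix (Fin (k α)) ℂ be a star-algebra homomorphism. Assume the family is norming: ‖a‖ = ⨆_{α ∈ ι} ‖ν_α(a)‖ for every a ∈ A (where the matrix algebras carry their C*-operator norms). Then there exists a sequence s : ℕ → ι such that the countable subfamily (ν_{s(j)})_{j ∈ ℕ} is separating: for every a ∈ A with a ≠ 0 there exists j ∈ ℕ with ν_{s(j)}(a) ≠ 0. -/

import Mathlib

open scoped Matrix.Norms.L2Operator

/-- A separable C*-algebra with a norming family of finite dimensional representations admits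
a countable separating subfamily. -/
theorem stmt_16 (A : Type*) [CStarAlgebra A] [TopologicalSpace.SeparableSpace A]
    (ι : Type*) [Nonempty ι] (k : ι → ℕ)
    (ν : ∀ α : ι, A →⋆ₐ[ℂ] Matrix (Fin (k α)) (Fin (k α)) ℂ)
    (hnorming : ∀ a : A, ‖a‖ = ⨆ α : ι, ‖ν α a‖) :
    ∃ s : ℕ → ι, ∀ a : A, a ≠ 0 → ∃ j : ℕ, ν (s j) a ≠ 0 := by
  have hle : ∀ (α : ι) (x : A), ‖ν α x‖ ≤ ‖x‖ := by
    intro α x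
    by_cases hb : BddAbove (Set.range fun β : ι => ‖ν β x‖)
    · rw [hnorming]; exact le_ciSup hb α
    · have h0 : ‖x‖ = 0 := by rw [hnorming, Real.iSup_of_not_bddAbove hb]
      have hx : x = 0 := norm_eq_zero.mp h0
      simp [hx]
  obtain ⟨u, hu⟩ := TopologicalSpace.exists_dense_seq A
  have hex : ∀ n m : ℕ, ∃ α : ι, ‖u n‖ - 1/(m+1) < ‖ν α (u n)‖ := by
    intro n m
    apply exists_lt_of_lt_ciSup
    rw [← hnorming]
    have : (0:ℝ) < 1/(m+1) := by positivity
    linarith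
  choose t ht using hex
  let e : ℕ × ℕ ≃ ℕ := Denumerable.eqv (ℕ × ℕ)
  refine ⟨fun j => t (e.symm j).1 (e.symm j).2, ?_⟩
  intro a ha
  have hapos : 0 < ‖a‖ := norm_pos_iff.mpr ha
  obtain ⟨m, hm⟩ := exists_nat_one_div_lt (show (0:ℝ) < ‖a‖/4 by positivity)
  obtain ⟨n, hn⟩ := hu.exists_dist_lt a (show (0:ℝ) < ‖a‖/4 by positivity)
  refine ⟨e (n, m), ?_⟩
  beta_reduce
  rw [show e.symm (e (n, m)) = (n, m) from e.symm_apply_apply _]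
  have h1 := ht n m
  have h2 : ‖u n - a‖ < ‖a‖/4 := by
    rw [← dist_eq_norm, dist_comm]; exact hn
  have key : 0 < ‖ν (t n m) a‖ := by
    have h3 : ‖ν (t n m) (u n - a)‖ ≤ ‖u n - a‖ := hle _ _
    have h4 : ‖ν (t n m) (u n)‖ - ‖ν (t n m) a‖ ≤ ‖ν (t n m) (u n - a)‖ := by
      have h := norm_sub_norm_le (ν (t n m) (u n)) (ν (t n m) a)
      rwa [← map_sub] at h
    have h5 := abs_le.mp (abs_norm_sub_norm_le (u n) a)
    linarith [h5.1, h5.2]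
  exact norm_pos_iff.mp key
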